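/- Fix 1 ≤ p < ∞ and r₀ > 0, and let ψ : (0, r₀) → ℝ be nondecreasing and K_p-convex (i.e. s ↦ ψ(K_p^{−1}(s)) is convex). Then: (i) the density Θ = lim_{0<s<t, t→0} (ψ(t) − ψ(s))/(K_p(t) − K_p(s)) exists with 0 ≤ Θ < ∞ (the quotients decrease as s and t decrease to 0); (ii) there exist c ∈ ℝ and r₁ ∈ (0, r₀] such that (ψ(r) − c)/K_p(r) decreases to Θ as r decreases to 0 in (0, r₁); (iii) if 1 ≤ p < 2 then (ψ(r) − ψ(0⁺))/K_p(r) decreases to Θ as r ↓ 0, where ψ(0⁺) = lim_{r↓0} ψ(r); (iv) if 2 ≤ p < ∞ then lim_{r↓0} ψ(r)/K_p(r) = Θ. -/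

import Mathlib

open Set Filter Topology

noncomputable section

/-- The Riesz kernel `K_p`. -/
def rieszKernel (p t : ℝ) : ℝ :=
  if p < 2 then t ^ (2 - p) else if p = 2 then Real.log t else -(t ^ (2 - p))

/-- The inverse of `K_p` on `(0, ∞)`. -/
def rieszKernelInv (p : ℝ) : ℝ → ℝ :=
  Function.invFunOn (rieszKernel p) (Set.Ioi 0)

lemma rk_strictMonoOn (p : ℝ) : StrictMonoOn (rieszKernel p) (Set.Ioi 0) := by
  intro x hx y hy hxy
  simp only [rieszKernel]
  rcases lt_trichotomy p 2 with h | h | h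
  · simp only [if_pos h]
    exact Real.rpow_lt_rpow (le_of_lt hx) hxy (by linarith)
  · simp only [if_neg (by linarith : ¬ p < 2), if_pos h]
    exact Real.log_lt_log hx hxy
  · simp only [if_neg (by linarith : ¬ p < 2), if_neg (by linarith : ¬ p = 2), neg_lt_neg_iff]
    rw [Real.rpow_def_of_pos (hx.trans hxy), Real.rpow_def_of_pos hx]
    exact Real.exp_lt_exp.2 (by nlinarith [Real.log_lt_log hx hxy])

lemma rk_inv (p : ℝ) {t : ℝ} (ht : (0:ℝ) < t) : rieszKernelInv p (rieszKernel p t) = t :=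
  ((rk_strictMonoOn p).injOn).leftInvOn_invFunOn ht


lemma rk_pos (p : ℝ) (hp2 : p < 2) {t : ℝ} (ht : 0 < t) : 0 < rieszKernel p t := by
  simp only [rieszKernel, if_pos hp2]
  exact Real.rpow_pos_of_pos ht _

lemma rk_neg (p : ℝ) (hp2 : 2 ≤ p) {t : ℝ} (ht : 0 < t) (ht1 : t < 1) : rieszKernel p t < 0 := by
  simp only [rieszKernel, if_neg (not_lt.2 hp2)]
  rcases eq_or_lt_of_le hp2 with h | h
  · simp only [if_pos h.symm]
    exact Real.log_neg ht ht1
  · simp only [if_neg (by linarith : ¬ p = 2), Left.neg_neg_iff]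
    exact Real.rpow_pos_of_pos ht _

lemma rk_tendsto_zero (p : ℝ) (hp2 : p < 2) :
    Tendsto (rieszKernel p) (𝓝[>] 0) (𝓝 0) := by
  have h : Tendsto (fun t : ℝ => t ^ (2 - p)) (𝓝[>] 0) (𝓝 0) := by
    have h := (Real.continuousAt_rpow_const 0 (2 - p) (Or.inr (by linarith))).tendsto
    rw [Real.zero_rpow (by linarith : (2:ℝ) - p ≠ 0)] at h
    exact h.mono_left nhdsWithin_le_nhds
  refine h.congr (fun t => ?_)
  simp [rieszKernel, hp2]

lemma rk_tendsto_atBot (p : ℝ) (hp2 : 2 ≤ p) :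
    Tendsto (rieszKernel p) (𝓝[>] 0) atBot := by
  rcases eq_or_lt_of_le hp2 with h | h
  · have hl := Real.tendsto_log_nhdsGT_zero
    refine hl.congr (fun t => ?_)
    simp [rieszKernel, ← h, (by linarith : ¬ p < 2)]
  · have h1 : Tendsto (fun t : ℝ => t ^ (2 - p)) (𝓝[>] 0) atTop := by
      have h2 := (tendsto_rpow_atTop (by linarith : (0:ℝ) < p - 2)).comp tendsto_inv_nhdsGT_zero
      refine (h2.congr' ?_)
      filter_upwards [self_mem_nhdsWithin] with t (ht : 0 < t)
      show (t⁻¹) ^ (p - 2) = t ^ (2 - p)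
      rw [Real.inv_rpow ht.le, ← Real.rpow_neg ht.le]
      ring_nf
    have h3 : Tendsto (fun t : ℝ => -(t ^ (2 - p))) (𝓝[>] 0) atBot :=
      tendsto_neg_atBot_iff.2 h1
    refine h3.congr (fun t => ?_)
    simp [rieszKernel, (by linarith : ¬ p < 2), (by linarith : ¬ p = 2)]

-- the fundamental slope monotonicity, stated with the quotient form
lemma rk_slope_mono (p : ℝ) (r₀ : ℝ) (ψ : ℝ → ℝ)
    (hconv : ConvexOn ℝ (rieszKernel p '' Set.Ioo 0 r₀)
      (fun s => ψ (rieszKernelInv p s)))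
    {s t s' t' : ℝ} (hs : 0 < s) (hst : s < t) (hss : s ≤ s') (htt : t ≤ t')
    (hst' : s' < t') (ht' : t' < r₀) :
    (ψ t - ψ s) / (rieszKernel p t - rieszKernel p s) ≤
      (ψ t' - ψ s') / (rieszKernel p t' - rieszKernel p s') := by
  set K := rieszKernel p with hKdef
  have hs' : 0 < s' := lt_of_lt_of_le hs hss
  have ht0 : 0 < t := hs.trans hst
  have hsmem : s ∈ Set.Ioo 0 r₀ := ⟨hs, by linarith⟩
  have htmem : t ∈ Set.Ioo 0 r₀ := ⟨ht0, by linarith⟩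
  have hs'mem : s' ∈ Set.Ioo 0 r₀ := ⟨hs', by linarith⟩
  have ht'mem : t' ∈ Set.Ioo 0 r₀ := ⟨hs'.trans hst', ht'⟩
  have hKs : K s ∈ K '' Set.Ioo 0 r₀ := ⟨s, hsmem, rfl⟩
  have hKt : K t ∈ K '' Set.Ioo 0 r₀ := ⟨t, htmem, rfl⟩
  have hKs' : K s' ∈ K '' Set.Ioo 0 r₀ := ⟨s', hs'mem, rfl⟩
  have hKt' : K t' ∈ K '' Set.Ioo 0 r₀ := ⟨t', ht'mem, rfl⟩
  have hM := rk_strictMonoOn p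
  have h1 : K s < K t := hM hs ht0 hst
  have h2 : K s ≤ K s' := (hM.monotoneOn) hs hs' hss
  have h3 : K t ≤ K t' := (hM.monotoneOn) ht0 ht'mem.1 htt
  have h4 : K s' < K t' := hM hs' ht'mem.1 hst'
  set φ := fun u => ψ (rieszKernelInv p u) with hφdef
  have eφs : φ (K s) = ψ s := by simp [hφdef, hKdef, rk_inv p hs]
  have eφt : φ (K t) = ψ t := by simp [hφdef, hKdef, rk_inv p ht0]
  have eφs' : φ (K s') = ψ s' := by simp [hφdef, hKdef, rk_inv p hs']
  have eφt' : φ (K t') = ψ t' := by simp [hφdef, hKdef, rk_inv p ht'mem.1]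
  have step1 : (φ (K t) - φ (K s)) / (K t - K s) ≤ (φ (K t') - φ (K s)) / (K t' - K s) :=
    hconv.secant_mono hKs hKt hKt' (ne_of_gt h1) (ne_of_gt (lt_of_lt_of_le h1 h3)) h3
  have step2 : (φ (K s) - φ (K t')) / (K s - K t') ≤ (φ (K s') - φ (K t')) / (K s' - K t') :=
    hconv.secant_mono hKt' hKs hKs' (ne_of_lt (lt_of_lt_of_le h1 h3))
      (ne_of_lt h4) h2
  have e1 : (φ (K s) - φ (K t')) / (K s - K t') = (φ (K t') - φ (K s)) / (K t' - K s) := by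
    rw [← neg_div_neg_eq]; ring_nf
  have e2 : (φ (K s') - φ (K t')) / (K s' - K t') = (φ (K t') - φ (K s')) / (K t' - K s') := by
    rw [← neg_div_neg_eq]; ring_nf
  rw [e1, e2] at step2
  calc (ψ t - ψ s) / (K t - K s) = (φ (K t) - φ (K s)) / (K t - K s) := by rw [eφs, eφt]
    _ ≤ (φ (K t') - φ (K s)) / (K t' - K s) := step1
    _ ≤ (φ (K t') - φ (K s')) / (K t' - K s') := step2
    _ = (ψ t' - ψ s') / (K t' - K s') := by rw [eφs', eφt']

set_option maxHeartbeats 2000000 in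
/-- Existence of the density `Θ` of a nondecreasing `K_p`-convex function on `(0, r₀)`,
together with the monotone-convergence descriptions of `Θ`. -/
theorem stmt8 (p : ℝ) (hp : 1 ≤ p) (r₀ : ℝ) (hr₀ : 0 < r₀)
    (ψ : ℝ → ℝ) (hmono : MonotoneOn ψ (Set.Ioo 0 r₀))
    (hconv : ConvexOn ℝ (rieszKernel p '' Set.Ioo 0 r₀)
      (fun s => ψ (rieszKernelInv p s))) :
    ∃ Θ : ℝ, 0 ≤ Θ ∧
      -- (i) the difference quotients decrease as s and t decrease to 0 ...
      (∀ s t s' t' : ℝ, 0 < s → s < t → s ≤ s' → t ≤ t' → s' < t' → t' < r₀ →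
        (ψ t - ψ s) / (rieszKernel p t - rieszKernel p s) ≤
          (ψ t' - ψ s') / (rieszKernel p t' - rieszKernel p s')) ∧
      -- ... and converge to the density Θ
      (∀ ε : ℝ, 0 < ε → ∃ δ : ℝ, 0 < δ ∧ ∀ s t : ℝ, 0 < s → s < t → t < δ →
        |(ψ t - ψ s) / (rieszKernel p t - rieszKernel p s) - Θ| < ε) ∧
      -- (ii) for some c and r₁, (ψ(r) − c)/K_p(r) decreases to Θ as r ↓ 0
      (∃ c r₁ : ℝ, 0 < r₁ ∧ r₁ ≤ r₀ ∧
        MonotoneOn (fun r => (ψ r - c) / rieszKernel p r) (Set.Ioo 0 r₁) ∧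
        Tendsto (fun r => (ψ r - c) / rieszKernel p r) (𝓝[>] 0) (𝓝 Θ)) ∧
      -- (iii) if 1 ≤ p < 2 then (ψ(r) − ψ(0⁺))/K_p(r) decreases to Θ as r ↓ 0
      (p < 2 → ∃ L : ℝ, Tendsto ψ (𝓝[>] 0) (𝓝 L) ∧
        MonotoneOn (fun r => (ψ r - L) / rieszKernel p r) (Set.Ioo 0 r₀) ∧
        Tendsto (fun r => (ψ r - L) / rieszKernel p r) (𝓝[>] 0) (𝓝 Θ)) ∧
      -- (iv) if 2 ≤ p < ∞ then ψ(r)/K_p(r) → Θ as r ↓ 0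
      (2 ≤ p → Tendsto (fun r => ψ r / rieszKernel p r) (𝓝[>] 0) (𝓝 Θ)) := by
  set K := rieszKernel p with hKdef
  set q : ℝ → ℝ → ℝ := fun s t => (ψ t - ψ s) / (K t - K s) with hqdef
  have hM := rk_strictMonoOn p
  -- part (i) monotonicity
  have hq : ∀ s t s' t' : ℝ, 0 < s → s < t → s ≤ s' → t ≤ t' → s' < t' → t' < r₀ →
      q s t ≤ q s' t' := fun s t s' t' a b c d e f =>
    rk_slope_mono p r₀ ψ hconv a b c d e f
  -- difference quotients are nonnegative
  have hq0 : ∀ s t : ℝ, 0 < s → s < t → t < r₀ → 0 ≤ q s t := by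
    intro s t hs hst ht
    have ht0 : 0 < t := hs.trans hst
    apply div_nonneg
    · have := hmono ⟨hs, hst.trans ht⟩ ⟨ht0, ht⟩ hst.le
      linarith
    · have := hM (show s ∈ Set.Ioi 0 from hs) (show t ∈ Set.Ioi 0 from ht0) hst
      linarith
  -- the key identity  ψ t - ψ s = q s t * (K t - K s)
  have hqe : ∀ s t : ℝ, 0 < s → s < t → ψ t - ψ s = q s t * (K t - K s) := by
    intro s t hs hst
    have h := hM (show s ∈ Set.Ioi 0 from hs) (show t ∈ Set.Ioi 0 from hs.trans hst) hst
    rw [hqdef]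
    rw [div_mul_cancel₀]
    exact ne_of_gt (by simpa [hKdef] using sub_pos.2 h)
  have hKlt : ∀ s t : ℝ, 0 < s → s < t → K s < K t := fun s t hs hst =>
    hM (show s ∈ Set.Ioi 0 from hs) (show t ∈ Set.Ioi 0 from hs.trans hst) hst
  -- the set of difference quotients
  set A : Set ℝ := {x | ∃ s t : ℝ, 0 < s ∧ s < t ∧ t < r₀ ∧ x = q s t} with hAdef
  have hA_ne : A.Nonempty := ⟨q (r₀/2) (3*r₀/4), r₀/2, 3*r₀/4, by linarith, by linarith,
    by linarith, rfl⟩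
  have hA_bdd : BddBelow A := ⟨0, by rintro x ⟨s, t, hs, hst, ht, rfl⟩; exact hq0 s t hs hst ht⟩
  set Θ := sInf A with hΘdef
  have hΘ0 : 0 ≤ Θ := le_csInf hA_ne (by rintro x ⟨s, t, hs, hst, ht, rfl⟩; exact hq0 s t hs hst ht)
  have hΘle : ∀ s t : ℝ, 0 < s → s < t → t < r₀ → Θ ≤ q s t := fun s t hs hst ht =>
    csInf_le hA_bdd ⟨s, t, hs, hst, ht, rfl⟩
  -- the limit property (i)
  have hlim : ∀ ε : ℝ, 0 < ε → ∃ δ : ℝ, 0 < δ ∧ δ < r₀ ∧ ∀ s t : ℝ, 0 < s → s < t → t < δ →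
      Θ ≤ q s t ∧ q s t < Θ + ε := by
    intro ε hε
    obtain ⟨x, ⟨s₀, t₀, hs₀, hst₀, ht₀, rfl⟩, hx⟩ :=
      exists_lt_of_csInf_lt hA_ne (show sInf A < Θ + ε by rw [← hΘdef]; linarith)
    refine ⟨s₀, hs₀, by linarith, fun s t hs hst ht => ?_⟩
    have h1 : q s t ≤ q s₀ t₀ := hq s t s₀ t₀ hs hst (by linarith) (by linarith) hst₀ ht₀
    exact ⟨hΘle s t hs hst (by linarith), by linarith⟩
  have hlimabs : ∀ ε : ℝ, 0 < ε → ∃ δ : ℝ, 0 < δ ∧ ∀ s t : ℝ, 0 < s → s < t → t < δ →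
      |q s t - Θ| < ε := by
    intro ε hε
    obtain ⟨δ, hδ, hδr, h⟩ := hlim ε hε
    refine ⟨δ, hδ, fun s t hs hst ht => ?_⟩
    obtain ⟨h1, h2⟩ := h s t hs hst ht
    rw [abs_lt]; constructor <;> linarith
  rcases lt_or_ge p 2 with hp2 | hp2
  · -- case 1 ≤ p < 2
    have hKpos : ∀ {t : ℝ}, 0 < t → 0 < K t := fun ht => rk_pos p hp2 ht
    set Q := q (r₀/2) (3*r₀/4) with hQdef
    have hQ0 : 0 ≤ Q := hq0 _ _ (by linarith) (by linarith) (by linarith)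
    have hψlb : ∀ s ∈ Set.Ioo (0:ℝ) r₀, ψ (r₀/2) - Q * K (r₀/2) ≤ ψ s := by
      intro s hs
      rcases le_or_gt (r₀/2) s with h | h
      · have h1 : ψ (r₀/2) ≤ ψ s := hmono ⟨by linarith, by linarith⟩ hs h
        have h2 : 0 ≤ Q * K (r₀/2) := mul_nonneg hQ0 (hKpos (by linarith)).le
        linarith
      · have hq1 : q s (r₀/2) ≤ Q :=
          hq s (r₀/2) (r₀/2) (3*r₀/4) hs.1 h h.le (by linarith) (by linarith) (by linarith)
        have heq := hqe s (r₀/2) hs.1 h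
        have hK1 : K s < K (r₀/2) := hKlt s (r₀/2) hs.1 h
        have hKs : 0 < K s := hKpos hs.1
        have hq0' : 0 ≤ q s (r₀/2) := hq0 s (r₀/2) hs.1 h (by linarith)
        nlinarith [mul_nonneg (sub_nonneg.2 hq1) (sub_nonneg.2 hK1.le),
          mul_nonneg hQ0 hKs.le]
    have hbdd : BddBelow (ψ '' Set.Ioo 0 r₀) := by
      refine ⟨ψ (r₀/2) - Q * K (r₀/2), ?_⟩
      rintro x ⟨s, hs, rfl⟩
      exact hψlb s hs
    have hne : (ψ '' Set.Ioo 0 r₀).Nonempty := ⟨ψ (r₀/2), ⟨r₀/2, ⟨by linarith, by linarith⟩, rfl⟩⟩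
    set L := sInf (ψ '' Set.Ioo 0 r₀) with hLdef
    have hLt : Tendsto ψ (𝓝[>] 0) (𝓝 L) :=
      MonotoneOn.tendsto_nhdsWithin_Ioo_right ⟨r₀/2, by constructor <;> linarith⟩ hmono hbdd
    have hLle : ∀ s ∈ Set.Ioo (0:ℝ) r₀, L ≤ ψ s := fun s hs =>
      csInf_le hbdd ⟨s, hs, rfl⟩
    have key : ∀ r r' : ℝ, 0 < r → r < r' → r' < r₀ → ψ r - K r * q r r' ≤ L := by
      intro r r' hr hrr' hr'
      refine le_csInf hne ?_
      rintro x ⟨s, hs, rfl⟩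
      have hqrr' : 0 ≤ q r r' := hq0 r r' hr hrr' hr'
      rcases le_or_gt r s with h | h
      · have h1 : ψ r ≤ ψ s := hmono ⟨hr, by linarith⟩ hs h
        have h2 : 0 ≤ K r * q r r' := mul_nonneg (hKpos hr).le hqrr'
        linarith
      · have hq2 : q s r ≤ q r r' := hq s r r r' hs.1 h h.le hrr'.le hrr' hr'
        have heq := hqe s r hs.1 h
        have hK1 : K s < K r := hKlt s r hs.1 h
        have hKs : 0 < K s := hKpos hs.1
        have hq0' : 0 ≤ q s r := hq0 s r hs.1 h (by linarith)
        nlinarith [mul_nonneg (sub_nonneg.2 hq2) (sub_nonneg.2 hK1.le),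
          mul_nonneg hqrr' hKs.le]
    have hmonL : MonotoneOn (fun r => (ψ r - L) / K r) (Set.Ioo 0 r₀) := by
      intro r hr r' hr' hle
      rcases eq_or_lt_of_le hle with rfl | hlt
      · exact le_refl _
      simp only
      rw [div_le_div_iff₀ (hKpos hr.1) (hKpos hr'.1)]
      have hkey := key r r' hr.1 hlt hr'.2
      have heq := hqe r r' hr.1 hlt
      have hK1 : K r < K r' := hKlt r r' hr.1 hlt
      have heqK : (ψ r' - ψ r) * K r = q r r' * (K r' - K r) * K r := by rw [heq]
      nlinarith [mul_nonneg (sub_nonneg.2 hkey) (sub_nonneg.2 hK1.le), heqK]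
    have hΘleh : ∀ r ∈ Set.Ioo (0:ℝ) r₀, Θ ≤ (ψ r - L) / K r := by
      intro r hr
      have hLub : L ≤ ψ r - Θ * K r := by
        have ev : ∀ᶠ s in 𝓝[>] (0:ℝ), ψ s ≤ ψ r - Θ * (K r - K s) := by
          have hmem : ∀ᶠ s in 𝓝[>] (0:ℝ), s < r :=
            eventually_nhdsWithin_of_eventually_nhds (Filter.Tendsto.eventually_lt_const hr.1 tendsto_id)
          filter_upwards [self_mem_nhdsWithin, hmem] with s (hs : 0 < s) hsr
          have hΘq : Θ ≤ q s r := hΘle s r hs hsr hr.2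
          have heq := hqe s r hs hsr
          have hK1 : K s < K r := hKlt s r hs hsr
          nlinarith [mul_le_mul_of_nonneg_right hΘq (sub_nonneg.2 hK1.le)]
        have h1 : Tendsto (fun s => ψ r - Θ * (K r - K s)) (𝓝[>] (0:ℝ))
            (𝓝 (ψ r - Θ * (K r - 0))) :=
          tendsto_const_nhds.sub (((tendsto_const_nhds.sub (rk_tendsto_zero p hp2)).const_mul Θ))
        have := le_of_tendsto_of_tendsto hLt h1 ev
        simpa using this
      rw [le_div_iff₀ (hKpos hr.1)]
      linarith
    have htendL : Tendsto (fun r => (ψ r - L) / K r) (𝓝[>] 0) (𝓝 Θ) := by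
      rw [Metric.tendsto_nhdsWithin_nhds]
      intro ε hε
      obtain ⟨δ, hδ, hδr, h⟩ := hlim (ε/2) (by linarith)
      refine ⟨δ, hδ, fun r hr hrd => ?_⟩
      have hr0 : 0 < r := hr
      have hrδ : r < δ := by
        rw [Real.dist_eq, sub_zero, abs_of_pos hr0] at hrd
        exact hrd
      have hrr₀ : r < r₀ := hrδ.trans hδr
      have hup : L ≥ ψ r - (Θ + ε/2) * K r := by
        refine le_csInf hne ?_
        rintro x ⟨s, hs, rfl⟩
        rcases le_or_gt r s with hle | hlt
        · have h1 : ψ r ≤ ψ s := hmono ⟨hr0, hrr₀⟩ hs hle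
          have h2 : 0 ≤ (Θ + ε/2) * K r := mul_nonneg (by linarith) (hKpos hr0).le
          linarith
        · obtain ⟨hl, hu⟩ := h s r hs.1 hlt hrδ
          have heq := hqe s r hs.1 hlt
          have hK1 : K s < K r := hKlt s r hs.1 hlt
          have hKs : 0 < K s := hKpos hs.1
          nlinarith [mul_le_mul_of_nonneg_right hu.le (sub_nonneg.2 hK1.le),
            mul_nonneg (by linarith : (0:ℝ) ≤ Θ + ε/2) hKs.le]
      have hub : (ψ r - L) / K r ≤ Θ + ε/2 := by
        rw [div_le_iff₀ (hKpos hr0)]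
        linarith
      have hlb : Θ ≤ (ψ r - L) / K r := hΘleh r ⟨hr0, hrr₀⟩
      rw [Real.dist_eq, abs_lt]
      constructor <;> linarith
    refine ⟨Θ, hΘ0, hq, hlimabs, ⟨L, r₀, hr₀, le_refl _, hmonL, htendL⟩,
      fun _ => ⟨L, hLt, hmonL, htendL⟩, fun h => by linarith⟩
  · -- case 2 ≤ p
    have hKneg : ∀ {t : ℝ}, 0 < t → t < 1 → K t < 0 := fun ht ht1 => rk_neg p hp2 ht ht1
    set m := min r₀ 1 with hmdef
    have hm0 : 0 < m := lt_min hr₀ one_pos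
    have hmr₀ : m ≤ r₀ := min_le_left _ _
    have hm1 : m ≤ 1 := min_le_right _ _
    set t₂ := m/2 with ht₂def
    set t₃ := 3*m/4 with ht₃def
    have ht₂0 : 0 < t₂ := by positivity
    have ht₂₃ : t₂ < t₃ := by rw [ht₂def, ht₃def]; linarith
    have ht₃r₀ : t₃ < r₀ := by rw [ht₃def]; linarith
    have ht₂1 : t₂ < 1 := by rw [ht₂def]; linarith
    have ht₂r₀ : t₂ < r₀ := ht₂₃.trans ht₃r₀
    have hKt₂ : K t₂ < 0 := hKneg ht₂0 ht₂1
    set Q := q t₂ t₃ with hQdef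
    have hQΘ : Θ ≤ Q := hΘle t₂ t₃ ht₂0 ht₂₃ ht₃r₀
    set c := ψ t₂ - K t₂ * Q with hcdef
    -- lower bound:  Θ ≤ (ψ r - c) / K r  for 0 < r < t₂
    have hlow : ∀ r : ℝ, 0 < r → r < t₂ → Θ ≤ (ψ r - c) / K r := by
      intro r hr hrt
      have hq1 : q r t₂ ≤ Q := hq r t₂ t₂ t₃ hr hrt hrt.le ht₂₃.le ht₂₃ ht₃r₀
      have hΘq : Θ ≤ q r t₂ := hΘle r t₂ hr hrt ht₂r₀
      have heq := hqe r t₂ hr hrt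
      have hKr : K r < 0 := hKneg hr (hrt.trans ht₂1)
      rw [le_div_iff_of_neg hKr]
      nlinarith [mul_nonneg (sub_nonneg.2 hq1) (neg_nonneg.2 hKt₂.le),
        mul_nonneg (sub_nonneg.2 hΘq) (neg_nonneg.2 hKr.le)]
    -- monotonicity on (0, t₂)
    have hmonc : MonotoneOn (fun r => (ψ r - c) / K r) (Set.Ioo 0 t₂) := by
      intro r hr r' hr' hle
      rcases eq_or_lt_of_le hle with rfl | hlt
      · exact le_refl _
      simp only
      have hKr : K r < 0 := hKneg hr.1 (hr.2.trans ht₂1)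
      have hKr' : K r' < 0 := hKneg hr'.1 (hr'.2.trans ht₂1)
      have hK1 : K r < K r' := hKlt r r' hr.1 hlt
      have hckey : ψ r - K r * q r r' ≤ c := by
        have hq1 : q r r' ≤ q r' t₂ := hq r r' r' t₂ hr.1 hlt hlt.le hr'.2.le hr'.2 ht₂r₀
        have hq2 : q r' t₂ ≤ Q := hq r' t₂ t₂ t₃ hr'.1 hr'.2 hr'.2.le ht₂₃.le ht₂₃ ht₃r₀
        have heq1 := hqe r r' hr.1 hlt
        have heq2 := hqe r' t₂ hr'.1 hr'.2
        have hK2 : K r' < K t₂ := hKlt r' t₂ hr'.1 hr'.2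
        nlinarith [mul_nonneg (sub_nonneg.2 hq1) (neg_nonneg.2 hKr'.le),
          mul_nonneg (sub_nonneg.2 hq2) (neg_nonneg.2 hKt₂.le), hcdef]
      have e1 : (ψ r - c) / K r = (c - ψ r) / (-K r) := by
        rw [← neg_div_neg_eq]; ring_nf
      have e2 : (ψ r' - c) / K r' = (c - ψ r') / (-K r') := by
        rw [← neg_div_neg_eq]; ring_nf
      rw [e1, e2, div_le_div_iff₀ (by linarith) (by linarith)]
      have heq1 := hqe r r' hr.1 hlt
      have heqK : (ψ r' - ψ r) * K r = q r r' * (K r' - K r) * K r := by rw [heq1]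
      nlinarith [mul_nonneg (sub_nonneg.2 hckey) (sub_nonneg.2 hK1.le), heqK]
    -- convergence
    have htendc : Tendsto (fun r => (ψ r - c) / K r) (𝓝[>] 0) (𝓝 Θ) := by
      rw [Metric.tendsto_nhds]
      intro ε hε
      obtain ⟨δ, hδ0, hδr, hδ⟩ := hlim (ε/2) (by linarith)
      set t' := min δ t₂ / 2 with ht'def
      have ht'0 : 0 < t' := by rw [ht'def]; positivity
      have ht'δ : t' < δ := by
        have : min δ t₂ ≤ δ := min_le_left _ _
        rw [ht'def]; linarith
      have ht't₂ : t' < t₂ := by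
        have : min δ t₂ ≤ t₂ := min_le_right _ _
        rw [ht'def]; linarith
      have hKt' : K t' < 0 := hKneg ht'0 (ht't₂.trans ht₂1)
      set C := ψ t' - c with hCdef
      set B : ℝ := (C - Θ * K t') * (2/ε) - 1 with hBdef
      have hev1 : ∀ᶠ r in 𝓝[>] (0:ℝ), r < t' :=
        eventually_nhdsWithin_of_eventually_nhds (Filter.Tendsto.eventually_lt_const ht'0 tendsto_id)
      have hev2 : ∀ᶠ r in 𝓝[>] (0:ℝ), K r < B :=
        (rk_tendsto_atBot p hp2).eventually (eventually_lt_atBot B)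
      filter_upwards [self_mem_nhdsWithin, hev1, hev2] with r hr0 hrt' hrB
      have hr0' : (0:ℝ) < r := hr0
      have hlb : Θ ≤ (ψ r - c) / K r := hlow r hr0' (hrt'.trans ht't₂)
      have hKr : K r < 0 := hKneg hr0' ((hrt'.trans ht't₂).trans ht₂1)
      obtain ⟨hql, hqu⟩ := hδ r t' hr0' hrt' ht'δ
      have heq := hqe r t' hr0' hrt'
      have f1 : ψ r - c = C - q r t' * (K t' - K r) := by
        rw [hCdef]; linarith
      have f2 : (Θ + ε - q r t' - ε/2) * K r ≤ 0 :=
        mul_nonpos_of_nonneg_of_nonpos (by linarith) hKr.le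
      have f3 : K r * (ε/2) < C - Θ * K t' := by
        have h1 : K r < (C - Θ * K t') * (2/ε) - 1 := hrB
        have h2 := mul_lt_mul_of_pos_right h1 (half_pos hε)
        have h3 : ((C - Θ * K t') * (2/ε) - 1) * (ε/2) = (C - Θ * K t') - ε/2 := by
          field_simp
        rw [h3] at h2
        linarith
      have f4 : (q r t' - Θ) * K t' ≤ 0 :=
        mul_nonpos_of_nonneg_of_nonpos (by linarith) hKt'.le
      have hub : (ψ r - c) / K r < Θ + ε := by
        rw [div_lt_iff_of_neg hKr]
        nlinarith [f1, f2, f3, f4]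
      rw [Real.dist_eq, abs_lt]
      exact ⟨by linarith, by linarith⟩
    -- part (iv)
    have hinv : Tendsto (fun r => (K r)⁻¹) (𝓝[>] (0:ℝ)) (𝓝 0) := by
      have h1 : Tendsto (fun r => -(rieszKernel p r)) (𝓝[>] (0:ℝ)) atTop :=
        tendsto_neg_atTop_iff.2 (rk_tendsto_atBot p hp2)
      have h2 := h1.inv_tendsto_atTop
      have h3 := h2.neg
      rw [neg_zero] at h3
      refine h3.congr (fun r => ?_)
      show -(-rieszKernel p r)⁻¹ = (K r)⁻¹
      rw [hKdef, inv_neg, neg_neg]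
    have hc0 : Tendsto (fun r => c / K r) (𝓝[>] (0:ℝ)) (𝓝 0) := by
      simpa [div_eq_mul_inv] using hinv.const_mul c
    have hiv : Tendsto (fun r => ψ r / K r) (𝓝[>] (0:ℝ)) (𝓝 Θ) := by
      have h1 := htendc.add hc0
      rw [add_zero] at h1
      refine h1.congr (fun r => ?_)
      rw [← add_div, sub_add_cancel]
    exact ⟨Θ, hΘ0, hq, hlimabs, ⟨c, t₂, ht₂0, by linarith, hmonc, htendc⟩,
      fun h => absurd h (not_lt.2 hp2), fun _ => hiv⟩

end
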